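/- Every Puiseux monoid is either antimatter or quasi-atomic. -/
import Mathlib


/-- `a` is an atom of the Puiseux monoid `M`. -/
def IsAtomIn (M : AddSubmonoid ℚ) (a : ℚ) : Prop :=
  a ∈ M ∧ a ≠ 0 ∧ ∀ x ∈ M, ∀ y ∈ M, a = x + y → x = 0 ∨ y = 0

/-- `b` is atomic in `M`: it is `0` or a sum of atoms of `M`. -/
def AtomicIn (M : AddSubmonoid ℚ) (b : ℚ) : Prop :=
  b ∈ AddSubmonoid.closure {a | IsAtomIn M a}

/-- `x` divides `y` in `M`. -/
def DvdIn (M : AddSubmonoid ℚ) (x y : ℚ) : Prop := y - x ∈ M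

def QuasiFurstenberg (M : AddSubmonoid ℚ) : Prop :=
  ∀ b ∈ M, b ≠ 0 → ∃ c ∈ M, ∃ a, IsAtomIn M a ∧ DvdIn M a (b + c) ∧ ¬ DvdIn M a c

def QuasiAtomic (M : AddSubmonoid ℚ) : Prop :=
  ∀ b ∈ M, ∃ c ∈ M, AtomicIn M (b + c)

def AlmostFurstenberg (M : AddSubmonoid ℚ) : Prop :=
  ∀ b ∈ M, b ≠ 0 →
    ∃ c, AtomicIn M c ∧ ∃ a, IsAtomIn M a ∧ DvdIn M a (b + c) ∧ ¬ DvdIn M a c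

def NearlyFurstenberg (M : AddSubmonoid ℚ) : Prop :=
  ∃ c ∈ M, ∀ b ∈ M, b ≠ 0 → ∃ a, IsAtomIn M a ∧ DvdIn M a (b + c) ∧ ¬ DvdIn M a c

def Furstenberg (M : AddSubmonoid ℚ) : Prop :=
  ∀ b ∈ M, b ≠ 0 → ∃ a, IsAtomIn M a ∧ DvdIn M a b

def Antimatter (M : AddSubmonoid ℚ) : Prop := ∀ a, ¬ IsAtomIn M a

def AtomicMonoid (M : AddSubmonoid ℚ) : Prop := ∀ b ∈ M, AtomicIn M b

def NearlyAtomic (M : AddSubmonoid ℚ) : Prop :=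
  ∃ c ∈ M, ∀ b ∈ M, b ≠ 0 → AtomicIn M (b + c)

def AlmostAtomic (M : AddSubmonoid ℚ) : Prop :=
  ∀ b ∈ M, ∃ c, AtomicIn M c ∧ AtomicIn M (b + c)

/-- Every Puiseux monoid is antimatter or quasi-atomic. -/
theorem stmt_4 (M : AddSubmonoid ℚ) (hM : ∀ x ∈ M, 0 ≤ x) :
    Antimatter M ∨ QuasiAtomic M := by
  by_cases h : ∃ a, IsAtomIn M a
  · right
    obtain ⟨a, ha⟩ := h
    intro b hb
    have hapos : 0 < a := lt_of_le_of_ne (hM a ha.1) (Ne.symm ha.2.1)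
    have hbnn : 0 ≤ b := hM b hb
    have hanum : 0 < a.num := Rat.num_pos.mpr hapos
    have hbnum : 0 ≤ b.num := Rat.num_nonneg.mpr hbnn
    set n : ℕ := a.num.toNat * b.den with hn
    have hant : a.num.toNat ≠ 0 := by omega
    have hn1 : 1 ≤ n := Nat.one_le_iff_ne_zero.mpr (Nat.mul_ne_zero hant b.den_nz)
    refine ⟨(n - 1) • b, nsmul_mem hb _, ?_⟩
    have key : b + (n - 1) • b = (b.num.toNat * a.den) • a := by
      have h1 : b + (n - 1) • b = n • b := by
        conv_rhs => rw [← Nat.add_sub_cancel' hn1]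
        rw [add_nsmul, one_nsmul]
      rw [h1, nsmul_eq_mul, nsmul_eq_mul, hn]
      have ca : ((a.num.toNat : ℚ)) = (a.num : ℚ) := by
        exact_mod_cast Int.toNat_of_nonneg hanum.le
      have cb : ((b.num.toNat : ℚ)) = (b.num : ℚ) := by
        exact_mod_cast Int.toNat_of_nonneg hbnum
      push_cast [ca, cb]
      linear_combination (a.num : ℚ) * Rat.mul_den_eq_num b
        - (b.num : ℚ) * Rat.mul_den_eq_num a
    show b + (n - 1) • b ∈ AddSubmonoid.closure {a | IsAtomIn M a}
    rw [key]
    have hmem : a ∈ AddSubmonoid.closure {a | IsAtomIn M a} :=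
      AddSubmonoid.subset_closure (show a ∈ {a | IsAtomIn M a} from ha)
    exact AddSubmonoid.nsmul_mem _ hmem _
  · left
    exact fun a ha => h ⟨a, ha⟩
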